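/- (Heavy-traffic growth rate for bounded job sizes, used in Appendix C.) If S is bounded, i.e. there exists B > 0 such that f vanishes almost everywhere on (B,∞), then the M/G/1 SRPT mean response time satisfies T̄(λ) = Θ(1/(1−ρ)) in heavy traffic: there exist constants 0 < c ≤ C and λ₀ ∈ (0, 1/m) such that for all λ ∈ (λ₀, 1/m), c/(1−λm) ≤ T̄(λ) ≤ C/(1−λm). -/

import Mathlib

open MeasureTheory

/-- Relevant load `ρ_{≤x} = λ ∫₀^x t f(t) dt`. -/
noncomputable def rhoLe (f : ℝ → ℝ) (lam x : ℝ) : ℝ :=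
  lam * ∫ t in (0:ℝ)..x, t * f t

/-- Tail of the service requirement distribution, `F̄(x) = ∫_x^∞ f(t) dt`. -/
noncomputable def tailS (f : ℝ → ℝ) (x : ℝ) : ℝ :=
  ∫ t in Set.Ioi x, f t

/-- Schrage's exact formula `T̄_λ(x)` for the mean response time of a size-`x`
job in an M/G/1 queue under SRPT. -/
noncomputable def Tsrpt1 (f : ℝ → ℝ) (lam x : ℝ) : ℝ :=
  (lam * (∫ t in (0:ℝ)..x, t ^ 2 * f t) + lam * x ^ 2 * tailS f x)
      / (2 * (1 - rhoLe f lam x) ^ 2)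
    + ∫ t in (0:ℝ)..x, 1 / (1 - rhoLe f lam t)

/-- Overall M/G/1 SRPT mean response time `T̄(λ) = ∫₀^∞ T̄_λ(x) f(x) dx`. -/
noncomputable def TsrptMean (f : ℝ → ℝ) (lam : ℝ) : ℝ :=
  ∫ x in Set.Ioi (0:ℝ), Tsrpt1 f lam x * f x

lemma key_bound (p : ℝ → ℝ) (hp_meas : Measurable p)
    (hp_nonneg : ∀ x, 0 ≤ p x) (hp_int : Integrable p)
    (B : ℝ) (hB0 : 0 < B) (hBp : ∫ x in Set.Ioi B, p x = 0)
    (ρ : ℝ) (hρdef : ρ = ∫ x in Set.Ioi (0:ℝ), p x) (hρ1 : ρ < 1) :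
    ∫ x in Set.Ioi (0:ℝ), p x / (1 - ∫ t in (0:ℝ)..x, p t) ^ 2 ≤ 2 / (1 - ρ) := by
  have hρ0 : 0 ≤ ρ := by
    rw [hρdef]; exact setIntegral_nonneg measurableSet_Ioi fun x _ => hp_nonneg x
  set P : ℝ → ℝ := fun x => ∫ t in (0:ℝ)..x, p t with hPdef
  have hPcont : Continuous P := hp_int.continuous_primitive 0
  have hPIoc : ∀ x : ℝ, 0 ≤ x → P x = ∫ t in Set.Ioc 0 x, p t := fun x hx =>
    intervalIntegral.integral_of_le hx
  have hPmono : Monotone P := by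
    intro x y hxy
    have h := intervalIntegral.integral_add_adjacent_intervals
      (hp_int.intervalIntegrable (a := 0) (b := x))
      (hp_int.intervalIntegrable (a := x) (b := y))
    have h2 : 0 ≤ ∫ t in x..y, p t :=
      intervalIntegral.integral_nonneg hxy fun u _ => hp_nonneg u
    simp only [hPdef]
    linarith [h, h2]
  have hsplit : ∀ x : ℝ, 0 ≤ x → ρ = P x + ∫ t in Set.Ioi x, p t := by
    intro x hx
    rw [hρdef, hPIoc x hx, ← setIntegral_union (Set.Ioc_disjoint_Ioi le_rfl)
      measurableSet_Ioi hp_int.integrableOn hp_int.integrableOn,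
      Set.Ioc_union_Ioi_eq_Ioi hx]
  have hP0 : P 0 = 0 := intervalIntegral.integral_same
  have hPnn : ∀ x : ℝ, 0 ≤ x → 0 ≤ P x := fun x hx => hP0 ▸ hPmono hx
  have hPle : ∀ x : ℝ, 0 ≤ x → P x ≤ ρ := by
    intro x hx
    have := hsplit x hx
    have h2 : 0 ≤ ∫ t in Set.Ioi x, p t :=
      setIntegral_nonneg measurableSet_Ioi fun u _ => hp_nonneg u
    linarith
  have hPB : P B = ρ := by have := hsplit B hB0.le; rw [hBp] at this; linarith
  have h1ρ : 0 < 1 - ρ := by linarith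
  set ψ : ℝ → ℝ := fun s => 2 * ((1 - s) ^ 3)⁻¹ with hψdef
  -- pointwise identity
  have hpt : ∀ x : ℝ, 0 ≤ x →
      p x / (1 - P x) ^ 2
        = p x + p x * ∫ s in Set.Ioc 0 ρ, Set.indicator (Set.Iic (P x)) ψ s := by
    intro x hx
    have hPx0 : 0 ≤ P x := hPnn x hx
    have hPxρ : P x ≤ ρ := hPle x hx
    have hne : ∀ s ∈ Set.uIcc (0:ℝ) (P x), (1:ℝ) - s ≠ 0 := by
      intro s hs
      rw [Set.uIcc_of_le hPx0] at hs
      have : s ≤ P x := hs.2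
      nlinarith [hs.1]
    have hFTC : ∫ s in (0:ℝ)..(P x), ψ s = ((1 - P x) ^ 2)⁻¹ - ((1 - (0:ℝ)) ^ 2)⁻¹ := by
      apply intervalIntegral.integral_eq_sub_of_hasDerivAt (f := fun s => ((1 - s) ^ 2)⁻¹)
      · intro s hs
        have h1s : (1:ℝ) - s ≠ 0 := hne s hs
        have hd : HasDerivAt (fun s : ℝ => (1 - s) ^ 2) (2 * (1 - s) ^ 1 * (-1)) s :=
          ((hasDerivAt_id s).const_sub 1).pow 2
        have hd2 := hd.inv (pow_ne_zero 2 h1s)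
        refine hd2.congr_deriv ?_
        rw [hψdef]
        field_simp
      · apply ContinuousOn.intervalIntegrable
        apply ContinuousOn.mul continuousOn_const
        exact ContinuousOn.inv₀ (by fun_prop) fun s hs => pow_ne_zero 3 (hne s hs)
    have hind : ∫ s in Set.Ioc 0 ρ, Set.indicator (Set.Iic (P x)) ψ s
        = ∫ s in Set.Ioc 0 (P x), ψ s := by
      rw [setIntegral_indicator measurableSet_Iic, Set.Ioc_inter_Iic,
        min_eq_right hPxρ]
    have hIoc : ∫ s in (0:ℝ)..(P x), ψ s = ∫ s in Set.Ioc 0 (P x), ψ s :=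
      intervalIntegral.integral_of_le hPx0
    have h1Px : ((1:ℝ) - P x) ^ 2 ≠ 0 := by
      have : (0:ℝ) < 1 - P x := by linarith
      positivity
    rw [hind, ← hIoc, hFTC, div_eq_mul_inv]
    ring

  -- Fubini setup
  set F : ℝ → ℝ → ℝ := fun x s => p x * Set.indicator (Set.Iic (P x)) ψ s with hFdef
  have hC0 : (0:ℝ) ≤ 2 * ((1 - ρ) ^ 3)⁻¹ := by positivity
  have hψ_le : ∀ s : ℝ, s ∈ Set.Ioc 0 ρ → 0 ≤ ψ s ∧ ψ s ≤ 2 * ((1 - ρ) ^ 3)⁻¹ := by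
    intro s hs
    have h1s : 0 < 1 - s := by linarith [hs.2]
    constructor
    · positivity
    · have hpow : (1 - ρ) ^ 3 ≤ (1 - s) ^ 3 := by
        apply pow_le_pow_left₀ h1ρ.le; linarith [hs.2]
      have := inv_anti₀ (by positivity) hpow
      simp only [hψdef]
      linarith
  have hFmeas : Measurable (Function.uncurry F) := by
    have hS : MeasurableSet {z : ℝ × ℝ | z.2 ≤ P z.1} :=
      (isClosed_le continuous_snd (hPcont.comp continuous_fst)).measurableSet
    have hψm : Measurable ψ := by
      apply Measurable.mul measurable_const
      exact ((measurable_const.sub measurable_id).pow_const 3).inv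
    have heq : Function.uncurry F
        = fun z : ℝ × ℝ => p z.1 * Set.indicator {z : ℝ × ℝ | z.2 ≤ P z.1}
            (fun z => ψ z.2) z := by
      funext z
      simp only [Function.uncurry, hFdef, Set.indicator_apply, Set.mem_Iic, Set.mem_setOf_eq]
    rw [heq]
    exact (hp_meas.comp measurable_fst).mul
      (((hψm.comp measurable_snd)).indicator hS)
  have hFint : Integrable (Function.uncurry F)
      ((volume.restrict (Set.Ioi (0:ℝ))).prod (volume.restrict (Set.Ioc (0:ℝ) ρ))) := by
    apply Integrable.mono' (g := fun z : ℝ × ℝ => p z.1 * (2 * ((1 - ρ) ^ 3)⁻¹))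
    · exact Integrable.mul_prod hp_int.integrableOn
        (integrableOn_const measure_Ioc_lt_top.ne)
    · exact hFmeas.aestronglyMeasurable
    · rw [Measure.prod_restrict]
      filter_upwards [ae_restrict_mem (measurableSet_Ioi.prod measurableSet_Ioc)] with z hz
      obtain ⟨hz1, hz2⟩ := hz
      have hψs := hψ_le z.2 hz2
      have : |Set.indicator (Set.Iic (P z.1)) ψ z.2| ≤ 2 * ((1 - ρ) ^ 3)⁻¹ := by
        rw [Set.indicator_apply]
        split
        · rw [abs_of_nonneg hψs.1]; exact hψs.2
        · simpa using hC0
      calc ‖Function.uncurry F z‖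
          = p z.1 * |Set.indicator (Set.Iic (P z.1)) ψ z.2| := by
            rw [Function.uncurry, Real.norm_eq_abs, hFdef, abs_mul,
              abs_of_nonneg (hp_nonneg z.1)]
        _ ≤ p z.1 * (2 * ((1 - ρ) ^ 3)⁻¹) :=
            mul_le_mul_of_nonneg_left this (hp_nonneg z.1)
  have hswap := integral_integral_swap hFint
  -- inner bound
  have hinner_le : ∀ s ∈ Set.Ioc (0:ℝ) ρ,
      (∫ x in Set.Ioi (0:ℝ), F x s) ≤ 2 * ((1 - s) ^ 2)⁻¹ := by
    intro s hs
    obtain ⟨hs0, hsρ⟩ := hs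
    have h1s : 0 < 1 - s := by linarith
    have hψnn : 0 ≤ ψ s := (hψ_le s ⟨hs0, hsρ⟩).1
    set E : Set ℝ := {x : ℝ | s ≤ P x} with hEdef
    have hEc : IsClosed E := isClosed_le continuous_const hPcont
    have hBE : B ∈ E := by simp only [hEdef, Set.mem_setOf_eq, hPB]; exact hsρ
    have hlb : ∀ x ∈ E, (0:ℝ) ≤ x := by
      intro x hx
      by_contra h
      push_neg at h
      have : P x ≤ P 0 := hPmono h.le
      rw [hP0] at this
      have : s ≤ 0 := le_trans hx this
      linarith
    set xs := sInf E with hxsdef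
    have hxsE : xs ∈ E := hEc.csInf_mem ⟨B, hBE⟩ ⟨0, hlb⟩
    have hxs0 : 0 ≤ xs := le_csInf ⟨B, hBE⟩ hlb
    have hPxs_le : P xs ≤ s := by
      by_contra h
      push_neg at h
      have hopen : IsOpen (P ⁻¹' Set.Ioi s) := (isOpen_Ioi).preimage hPcont
      obtain ⟨ε, hε, hball⟩ := Metric.isOpen_iff.mp hopen xs h
      have hmem : xs - ε / 2 ∈ E := by
        have : xs - ε / 2 ∈ Metric.ball xs ε := by
          simp only [Metric.mem_ball, Real.dist_eq]
          rw [abs_of_nonpos (by linarith)]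
          linarith
        have h2 : s < P (xs - ε / 2) := hball this
        exact le_of_lt h2
      have := csInf_le ⟨0, hlb⟩ hmem
      linarith
    have hPxs : P xs = s := le_antisymm hPxs_le hxsE
    have hFind : ∀ x : ℝ, F x s = Set.indicator E (fun x => p x * ψ s) x := by
      intro x
      simp only [hFdef, Set.indicator_apply, Set.mem_Iic, hEdef, Set.mem_setOf_eq]
      split <;> simp
    have hstep : (∫ x in Set.Ioi (0:ℝ), F x s)
        = ∫ x in Set.Ioi 0 ∩ E, p x * ψ s := by
      rw [show (fun x => F x s) = fun x => Set.indicator E (fun x => p x * ψ s) x from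
        funext hFind]
      exact setIntegral_indicator hEc.measurableSet
    have hsub : Set.Ioi (0:ℝ) ∩ E ⊆ Set.Ici xs := by
      rintro x ⟨-, hxE⟩
      exact csInf_le ⟨0, hlb⟩ hxE
    have hmul_int : Integrable (fun x => p x * ψ s) := hp_int.mul_const _
    have hstep2 : (∫ x in Set.Ioi 0 ∩ E, p x * ψ s) ≤ ∫ x in Set.Ici xs, p x * ψ s := by
      apply setIntegral_mono_set hmul_int.integrableOn
      · filter_upwards with x
        exact mul_nonneg (hp_nonneg x) hψnn
      · exact HasSubset.Subset.eventuallyLE hsub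
    have hstep3 : (∫ x in Set.Ici xs, p x * ψ s) = (ρ - s) * ψ s := by
      rw [integral_Ici_eq_integral_Ioi, integral_mul_const]
      have := hsplit xs hxs0
      rw [hPxs] at this
      rw [show (∫ x in Set.Ioi xs, p x) = ρ - s by linarith]
    have hfin : (ρ - s) * ψ s ≤ 2 * ((1 - s) ^ 2)⁻¹ := by
      have h1 : (ρ - s) * ψ s ≤ (1 - s) * ψ s :=
        mul_le_mul_of_nonneg_right (by linarith) hψnn
      have h2 : (1 - s) * ψ s = 2 * ((1 - s) ^ 2)⁻¹ := by
        rw [hψdef]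
        field_simp
      linarith
    linarith [hstep, hstep2, hstep3, hfin]
  -- integrate the bound
  have h2int : IntegrableOn (fun s : ℝ => 2 * ((1 - s) ^ 2)⁻¹) (Set.Ioc 0 ρ) := by
    apply IntegrableOn.mono_set (t := Set.Icc 0 ρ) _ Set.Ioc_subset_Icc_self
    apply ContinuousOn.integrableOn_Icc
    apply ContinuousOn.mul continuousOn_const
    apply ContinuousOn.inv₀ (by fun_prop)
    intro s hs
    have : (0:ℝ) < 1 - s := by
      rcases hs with ⟨_, h2⟩; linarith
    positivity
  have houter : (∫ s in Set.Ioc (0:ℝ) ρ, ∫ x in Set.Ioi (0:ℝ), F x s)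
      ≤ ∫ s in Set.Ioc (0:ℝ) ρ, 2 * ((1 - s) ^ 2)⁻¹ := by
    apply integral_mono_of_nonneg
    · filter_upwards [ae_restrict_mem measurableSet_Ioc] with s hs
      apply setIntegral_nonneg measurableSet_Ioi
      intro x hx
      apply mul_nonneg (hp_nonneg x)
      refine Set.indicator_nonneg (fun u hu => ?_) s
      have hu1 : u ≤ ρ := le_trans hu (hPle x (le_of_lt hx))
      have h1u : (0:ℝ) < 1 - u := by linarith
      simp only [hψdef]
      positivity
    · exact h2int
    · filter_upwards [ae_restrict_mem measurableSet_Ioc] with s hs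
      exact hinner_le s hs
  have hFTC2 : (∫ s in Set.Ioc (0:ℝ) ρ, 2 * ((1 - s) ^ 2)⁻¹) = 2 * (1 - ρ)⁻¹ - 2 := by
    rw [← intervalIntegral.integral_of_le hρ0]
    have : ∫ s in (0:ℝ)..ρ, 2 * ((1 - s) ^ 2)⁻¹
        = (fun s : ℝ => 2 * (1 - s)⁻¹) ρ - (fun s : ℝ => 2 * (1 - s)⁻¹) 0 := by
      apply intervalIntegral.integral_eq_sub_of_hasDerivAt
      · intro s hs
        rw [Set.uIcc_of_le hρ0] at hs
        have h1s : (1:ℝ) - s ≠ 0 := by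
          have := hs.2; intro h; nlinarith
        have hd : HasDerivAt (fun s : ℝ => 1 - s) (-1) s := (hasDerivAt_id s).const_sub 1
        have hd2 := (hd.inv h1s).const_mul 2
        refine hd2.congr_deriv ?_
        field_simp
      · apply ContinuousOn.intervalIntegrable
        apply ContinuousOn.mul continuousOn_const
        apply ContinuousOn.inv₀ (by fun_prop)
        intro s hs
        rw [Set.uIcc_of_le hρ0] at hs
        have : (0:ℝ) < 1 - s := by linarith [hs.2]
        positivity
    rw [this]
    norm_num
  -- assemble
  have hint2 : Integrable (fun x => ∫ s in Set.Ioc (0:ℝ) ρ, F x s)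
      (volume.restrict (Set.Ioi (0:ℝ))) := by
    have h := hFint.integral_prod_left
    simpa [Function.uncurry] using h
  have hLHS : (∫ x in Set.Ioi (0:ℝ), p x / (1 - P x) ^ 2)
      = ρ + ∫ x in Set.Ioi (0:ℝ), ∫ s in Set.Ioc (0:ℝ) ρ, F x s := by
    have hadd := integral_add (μ := volume.restrict (Set.Ioi (0:ℝ)))
      hp_int.integrableOn hint2
    rw [← hρdef] at hadd
    rw [← hadd]
    apply setIntegral_congr_fun measurableSet_Ioi
    intro x hx
    show p x / (1 - P x) ^ 2 = p x + ∫ s in Set.Ioc (0:ℝ) ρ, F x s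
    rw [hpt x (le_of_lt hx)]
    congr 1
    exact (integral_const_mul (p x) _).symm
  have hfinal : (∫ x in Set.Ioi (0:ℝ), p x / (1 - P x) ^ 2)
      ≤ ρ + (2 * (1 - ρ)⁻¹ - 2) := by
    rw [hLHS, hswap]
    linarith [houter, hFTC2.le, hFTC2.ge]
  have : 2 / (1 - ρ) = 2 * (1 - ρ)⁻¹ := by rw [div_eq_mul_inv]
  rw [this]
  linarith

set_option maxHeartbeats 4000000

/-- **Heavy-traffic growth rate for bounded job sizes.** If `S` is bounded,
then `T̄(λ) = Θ(1/(1−ρ))` in heavy traffic: there are constants `0 < c ≤ C`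
and `lam₀ ∈ (0, 1/m)` such that for all `λ ∈ (lam₀, 1/m)`,
`c/(1−λm) ≤ T̄(λ) ≤ C/(1−λm)`. -/
theorem TsrptMean_theta_bounded
    (f : ℝ → ℝ) (m : ℝ)
    (hf_meas : Measurable f)
    (hf_nonneg : ∀ x, 0 ≤ f x)
    (hf_zero : ∀ x ≤ 0, f x = 0)
    (hf_prob : ∫ t in Set.Ioi (0:ℝ), f t = 1)
    (hm_int : Integrable (fun t => t * f t) (volume.restrict (Set.Ioi 0)))
    (hm_def : m = ∫ t in Set.Ioi (0:ℝ), t * f t)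
    (hm_pos : 0 < m)
    (hbounded : ∃ B > (0:ℝ), ∀ᵐ x : ℝ, B < x → f x = 0) :
    ∃ c C lam₀ : ℝ, 0 < c ∧ c ≤ C ∧ lam₀ ∈ Set.Ioo 0 (1/m) ∧
      ∀ lam ∈ Set.Ioo lam₀ (1/m),
        c / (1 - lam * m) ≤ TsrptMean f lam ∧
        TsrptMean f lam ≤ C / (1 - lam * m) := by
  classical
  obtain ⟨B, hB0, hsupp⟩ := hbounded
  -- global nonnegativity of weighted densities
  have hg_nn : ∀ t : ℝ, 0 ≤ t * f t := by
    intro t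
    rcases le_or_gt t 0 with h | h
    · rw [hf_zero t h]; ring_nf; exact le_refl 0
    · exact mul_nonneg h.le (hf_nonneg t)
  have hq_nn : ∀ t : ℝ, 0 ≤ t ^ 2 * f t := fun t => mul_nonneg (sq_nonneg t) (hf_nonneg t)
  -- integrability of f
  have hf_int : IntegrableOn f (Set.Ioi 0) := by
    by_contra h
    rw [MeasureTheory.integral_undef h] at hf_prob
    norm_num at hf_prob
  have hext : ∀ u : ℝ → ℝ, (∀ x ≤ 0, u x = 0) → IntegrableOn u (Set.Ioi 0) →
      Integrable u := by
    intro u hu0 hint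
    have heq : u = Set.indicator (Set.Ioi 0) u := by
      funext x
      rcases le_or_gt x 0 with h | h
      · rw [Set.indicator_of_notMem (by simpa using h), hu0 x h]
      · exact (Set.indicator_of_mem h u).symm
    rw [heq]
    exact hint.integrable_indicator measurableSet_Ioi
  have hfR : Integrable f := hext f hf_zero hf_int
  have hgR : Integrable (fun t => t * f t) :=
    hext _ (fun x hx => by rw [hf_zero x hx]; ring) hm_int
  have hg2le : ∀ᵐ t : ℝ, 0 < t → t ^ 2 * f t ≤ B * (t * f t) := by
    filter_upwards [hsupp] with t ht h0t
    rcases le_or_gt t B with h | h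
    · nlinarith [mul_nonneg (mul_nonneg (sub_nonneg.mpr h) h0t.le) (hf_nonneg t)]
    · rw [ht h]; ring_nf; exact le_refl 0
  have h2_int : IntegrableOn (fun t => t ^ 2 * f t) (Set.Ioi 0) := by
    apply Integrable.mono' (hm_int.const_mul B)
    · exact ((measurable_id.pow_const 2).mul hf_meas).aestronglyMeasurable
    · filter_upwards [ae_restrict_mem measurableSet_Ioi, ae_restrict_of_ae hg2le]
        with t ht hle
      rw [Real.norm_eq_abs, abs_of_nonneg (hq_nn t)]
      exact hle ht
  have h2R : Integrable (fun t => t ^ 2 * f t) :=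
    hext _ (fun x hx => by rw [hf_zero x hx]; ring) h2_int
  set G : ℝ → ℝ := fun x => ∫ t in (0:ℝ)..x, t * f t with hGdef
  set Q : ℝ → ℝ := fun x => ∫ t in (0:ℝ)..x, t ^ 2 * f t with hQdef
  have hGcont : Continuous G := hgR.continuous_primitive 0
  have hQcont : Continuous Q := h2R.continuous_primitive 0
  have hprim_mono : ∀ (u : ℝ → ℝ), Integrable u → (∀ t, 0 ≤ u t) →
      Monotone (fun x => ∫ t in (0:ℝ)..x, u t) := by
    intro u hu hunn x y hxy
    have h := intervalIntegral.integral_add_adjacent_intervals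
      (hu.intervalIntegrable (a := 0) (b := x)) (hu.intervalIntegrable (a := x) (b := y))
    have h2 : 0 ≤ ∫ t in x..y, u t :=
      intervalIntegral.integral_nonneg hxy fun t _ => hunn t
    simp only
    linarith
  have hGmono : Monotone G := hprim_mono _ hgR hg_nn
  have hQmono : Monotone Q := hprim_mono _ h2R hq_nn
  have hG0 : G 0 = 0 := intervalIntegral.integral_same
  have hQ0 : Q 0 = 0 := intervalIntegral.integral_same
  have hGnn : ∀ x : ℝ, 0 ≤ x → 0 ≤ G x := fun x hx => hG0 ▸ hGmono hx
  have hQnn : ∀ x : ℝ, 0 ≤ x → 0 ≤ Q x := fun x hx => hQ0 ▸ hQmono hx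
  have hGneg : ∀ x : ℝ, x ≤ 0 → G x = 0 := by
    intro x hx
    have : ∫ t in (0:ℝ)..x, t * f t = ∫ t in (0:ℝ)..x, (0:ℝ) := by
      apply intervalIntegral.integral_congr
      intro t ht
      rw [Set.uIcc_of_ge hx] at ht
      show t * f t = 0
      rw [hf_zero t ht.2]; ring
    simpa using this
  have hGnn' : ∀ x : ℝ, 0 ≤ G x := by
    intro x
    rcases le_or_gt x 0 with h | h
    · rw [hGneg x h]
    · exact hGnn x h.le
  have hsplitI : ∀ (u : ℝ → ℝ), Integrable u → ∀ x : ℝ, 0 ≤ x →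
      (∫ t in Set.Ioi (0:ℝ), u t)
        = (∫ t in (0:ℝ)..x, u t) + ∫ t in Set.Ioi x, u t := by
    intro u hu x hx
    rw [intervalIntegral.integral_of_le hx,
      ← setIntegral_union (Set.Ioc_disjoint_Ioi le_rfl) measurableSet_Ioi
        hu.integrableOn hu.integrableOn, Set.Ioc_union_Ioi_eq_Ioi hx]
  have hGm : ∀ x : ℝ, 0 ≤ x → G x + (∫ t in Set.Ioi x, t * f t) = m := by
    intro x hx
    have h := hsplitI _ hgR x hx
    rw [← hm_def] at h
    simp only [hGdef]
    linarith
  have hGle : ∀ x : ℝ, G x ≤ m := by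
    intro x
    rcases le_or_gt x 0 with h | h
    · rw [hGneg x h]; exact hm_pos.le
    · have h1 := hGm x h.le
      have h2 : 0 ≤ ∫ t in Set.Ioi x, t * f t :=
        setIntegral_nonneg measurableSet_Ioi fun t _ => hg_nn t
      linarith
  have htailg0 : ∀ x : ℝ, B ≤ x → (∫ t in Set.Ioi x, t * f t) = 0 := by
    intro x hBx
    apply integral_eq_zero_of_ae
    filter_upwards [ae_restrict_of_ae hsupp, ae_restrict_mem measurableSet_Ioi]
      with t h1 h2
    rw [h1 (lt_of_le_of_lt hBx h2)]
    simp
  have hGB : G B = m := by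
    have h := hGm B hB0.le
    rw [htailg0 B le_rfl] at h
    linarith
  -- choose a with G a ≤ m / 2
  obtain ⟨a, ha0, haG⟩ : ∃ a : ℝ, 0 < a ∧ G a ≤ m / 2 := by
    obtain ⟨δ, hδ0, hδ⟩ := Metric.continuousAt_iff.mp hGcont.continuousAt (m / 2)
      (by linarith)
    refine ⟨δ / 2, by linarith, ?_⟩
    have hd : dist (δ / 2) (0:ℝ) < δ := by
      rw [Real.dist_eq, abs_of_nonneg (by linarith)]; linarith
    have := hδ hd
    rw [Real.dist_eq, hG0, sub_zero, abs_of_nonneg (hGnn _ (by linarith))] at this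
    linarith
  -- x⋆ : first point where G reaches m
  set S0 : Set ℝ := {x : ℝ | G x = m} with hS0def
  have hS0B : B ∈ S0 := hGB
  have hS0lb : ∀ x ∈ S0, (0:ℝ) ≤ x := by
    intro x hx
    by_contra h
    push_neg at h
    have := hGneg x h.le
    rw [hS0def, Set.mem_setOf_eq, this] at hx
    linarith
  have hS0c : IsClosed S0 := isClosed_eq hGcont continuous_const
  set xstar : ℝ := sInf S0 with hxstardef
  have hxstarS0 : xstar ∈ S0 := hS0c.csInf_mem ⟨B, hS0B⟩ ⟨0, hS0lb⟩
  have hGxstar : G xstar = m := hxstarS0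
  have hxstar_nn : 0 ≤ xstar := le_csInf ⟨B, hS0B⟩ hS0lb
  have hxstar_pos : 0 < xstar := by
    rcases hxstar_nn.lt_or_eq with h | h
    · exact h
    · exfalso; rw [← h, hG0] at hGxstar; linarith
  have hxstarB : xstar ≤ B := csInf_le ⟨0, hS0lb⟩ hS0B
  have hGlt : ∀ x : ℝ, x < xstar → G x < m := by
    intro x hx
    rcases (hGle x).lt_or_eq with h | h
    · exact h
    · exfalso
      have : xstar ≤ x := csInf_le ⟨0, hS0lb⟩ h
      linarith
  -- Q xstar > 0
  have hQxstar : 0 < Q xstar := by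
    rcases (hQnn xstar hxstar_nn).lt_or_eq with h | h
    · exact h
    · exfalso
      have hQI : Q xstar = ∫ t in Set.Ioc 0 xstar, t ^ 2 * f t :=
        intervalIntegral.integral_of_le hxstar_nn
      have hzero : (fun t => t ^ 2 * f t) =ᵐ[volume.restrict (Set.Ioc 0 xstar)] 0 := by
        apply (integral_eq_zero_iff_of_nonneg_ae
          (Filter.Eventually.of_forall (fun t => hq_nn t)) h2R.integrableOn).mp
        rw [← hQI, ← h]
      have hgzero : (fun t => t * f t) =ᵐ[volume.restrict (Set.Ioc 0 xstar)] 0 := by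
        filter_upwards [hzero, ae_restrict_mem measurableSet_Ioc] with t h1 h2
        have ht0 : 0 < t := h2.1
        have hft : f t = 0 := by
          have h1' : t ^ 2 * f t = 0 := h1
          rcases mul_eq_zero.mp h1' with h' | h'
          · exfalso; exact (by positivity : (0:ℝ) < t ^ 2).ne' h'
          · exact h'
        show t * f t = 0
        rw [hft]; ring
      have : G xstar = 0 := by
        have hGI : G xstar = ∫ t in Set.Ioc 0 xstar, t * f t :=
          intervalIntegral.integral_of_le hxstar_nn
        rw [hGI, integral_congr_ae hgzero]
        simp
      rw [hGxstar] at this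
      linarith
  -- choose x̂ < x⋆ with Q x̂ > 0
  obtain ⟨xh, hxh0, hxhlt, hQxh⟩ :
      ∃ xh : ℝ, 0 < xh ∧ xh < xstar ∧ 0 < Q xh := by
    obtain ⟨δ, hδ0, hδ⟩ := Metric.continuousAt_iff.mp hQcont.continuousAt (Q xstar / 2)
      (by linarith)
    refine ⟨xstar - min δ xstar / 2, ?_, ?_, ?_⟩
    · have : min δ xstar ≤ xstar := min_le_right _ _
      linarith
    · have : 0 < min δ xstar := lt_min hδ0 hxstar_pos
      linarith
    · have hd : dist (xstar - min δ xstar / 2) xstar < δ := by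
        rw [Real.dist_eq]
        have h1 : 0 < min δ xstar := lt_min hδ0 hxstar_pos
        have h2 : min δ xstar ≤ δ := min_le_left _ _
        rw [abs_of_nonpos (by linarith)]
        linarith
      have := hδ hd
      rw [Real.dist_eq, abs_sub_lt_iff] at this
      linarith [this.2]
  set c0 : ℝ := Q xh with hc0def
  set r : ℝ := m - G xh with hrdef
  have hr0 : 0 < r := by
    have := hGlt xh hxhlt
    rw [hrdef]; linarith
  have hrm : r ≤ m := by
    have := hGnn xh hxh0.le
    rw [hrdef]; linarith
  set lam₀ : ℝ := 1 / (m + r) with hlam₀def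
  have hlam₀_pos : 0 < lam₀ := by rw [hlam₀def]; positivity
  have hlam₀_lt : lam₀ < 1 / m := by
    rw [hlam₀def]
    apply one_div_lt_one_div_of_lt hm_pos
    linarith
  set Cu : ℝ := B * (2 + 1 / (a * lam₀)) + m with hCudef
  set cl : ℝ := c0 / (8 * B) with hcldef
  have hcl_pos : 0 < cl := by rw [hcldef]; positivity
  refine ⟨cl, max Cu cl, lam₀, hcl_pos, le_max_right _ _, ⟨hlam₀_pos, hlam₀_lt⟩, ?_⟩
  intro lam hlam
  obtain ⟨hl0, hl1⟩ := hlam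
  have hlam_pos : 0 < lam := lt_trans hlam₀_pos hl0
  have hρ : lam * m < 1 := (lt_div_iff₀ hm_pos).mp hl1
  have h1ρ : 0 < 1 - lam * m := by linarith
  have hlamG_le : ∀ x : ℝ, lam * G x ≤ lam * m := fun x =>
    mul_le_mul_of_nonneg_left (hGle x) hlam_pos.le
  have hden : ∀ x : ℝ, 0 < 1 - lam * G x := fun x => by
    have := hlamG_le x; linarith
  have hrho : ∀ x : ℝ, rhoLe f lam x = lam * G x := fun x => rfl
  have hT1eq : ∀ x : ℝ, Tsrpt1 f lam x
      = (lam * Q x + lam * x ^ 2 * tailS f x) / (2 * (1 - lam * G x) ^ 2)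
        + ∫ t in (0:ℝ)..x, 1 / (1 - lam * G t) := fun x => rfl
  have htail_nn : ∀ x : ℝ, 0 ≤ tailS f x := fun x =>
    setIntegral_nonneg measurableSet_Ioi fun t _ => hf_nonneg t
  have hcont_inner : Continuous fun t : ℝ => 1 / (1 - lam * G t) := by
    apply Continuous.div continuous_const
      (continuous_const.sub (continuous_const.mul hGcont))
    intro t; exact (hden t).ne'
  have hRcont : Continuous fun x : ℝ => ∫ t in (0:ℝ)..x, 1 / (1 - lam * G t) :=
    intervalIntegral.continuous_primitive
      (fun a b => hcont_inner.intervalIntegrable a b) 0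
  have htailcontOn : ContinuousOn (tailS f) (Set.Ioi 0) := by
    have hgcont : Continuous fun x : ℝ => 1 - ∫ t in (0:ℝ)..x, f t :=
      continuous_const.sub (hfR.continuous_primitive 0)
    apply hgcont.continuousOn.congr
    intro x hx
    have h := hsplitI f hfR x (le_of_lt hx)
    rw [hf_prob] at h
    show tailS f x = 1 - ∫ t in (0:ℝ)..x, f t
    rw [tailS]
    linarith
  have hT1contOn : ContinuousOn (Tsrpt1 f lam) (Set.Ioi 0) := by
    have h1 : ContinuousOn (fun x : ℝ =>
        (lam * Q x + lam * x ^ 2 * tailS f x) / (2 * (1 - lam * G x) ^ 2))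
        (Set.Ioi 0) := by
      apply ContinuousOn.div
      · exact ((continuous_const.mul hQcont).continuousOn).add
          (((continuous_const.mul (continuous_pow 2)).continuousOn).mul htailcontOn)
      · exact (continuous_const.mul
          ((continuous_const.sub (continuous_const.mul hGcont)).pow 2)).continuousOn
      · intro x _
        exact ne_of_gt (by nlinarith [mul_pos (hden x) (hden x)])
    exact (h1.add hRcont.continuousOn).congr fun x _ => hT1eq x
  have hT1nn : ∀ x : ℝ, 0 ≤ x → 0 ≤ Tsrpt1 f lam x := by
    intro x hx
    rw [hT1eq x]
    have h1 : 0 ≤ lam * Q x + lam * x ^ 2 * tailS f x :=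
      add_nonneg (mul_nonneg hlam_pos.le (hQnn x hx))
        (mul_nonneg (mul_nonneg hlam_pos.le (sq_nonneg x)) (htail_nn x))
    have h2 : 0 < 2 * (1 - lam * G x) ^ 2 := by nlinarith [mul_pos (hden x) (hden x)]
    have h3 : 0 ≤ ∫ t in (0:ℝ)..x, 1 / (1 - lam * G t) :=
      intervalIntegral.integral_nonneg hx fun t _ =>
        le_of_lt (one_div_pos.mpr (hden t))
    exact add_nonneg (div_nonneg h1 h2.le) h3
  have hQleB : ∀ x : ℝ, 0 ≤ x → Q x ≤ B * G x := by
    intro x hx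
    have hQI : Q x = ∫ t in Set.Ioc 0 x, t ^ 2 * f t :=
      intervalIntegral.integral_of_le hx
    have hGI : G x = ∫ t in Set.Ioc 0 x, t * f t :=
      intervalIntegral.integral_of_le hx
    rw [hQI, hGI, ← integral_const_mul]
    apply integral_mono_ae h2R.integrableOn ((hgR.const_mul B).integrableOn)
    filter_upwards [ae_restrict_of_ae hg2le, ae_restrict_mem measurableSet_Ioc]
      with t h1 h2
    exact h1 h2.1
  have htail2 : ∀ x : ℝ, 0 ≤ x → x ^ 2 * tailS f x ≤ B * (m - G x) := by
    intro x hx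
    have h1 : x ^ 2 * tailS f x = ∫ t in Set.Ioi x, x ^ 2 * f t :=
      (integral_const_mul _ _).symm
    have h2 : (∫ t in Set.Ioi x, x ^ 2 * f t) ≤ ∫ t in Set.Ioi x, B * (t * f t) := by
      apply integral_mono_ae ((hfR.const_mul (x ^ 2)).integrableOn)
        ((hgR.const_mul B).integrableOn)
      filter_upwards [ae_restrict_of_ae hsupp, ae_restrict_mem measurableSet_Ioi]
        with t hft ht
      rcases le_or_gt t B with h | h
      · have hxt : x < t := ht
        have hx2 : x ^ 2 ≤ B * t := by
          nlinarith [mul_nonneg hx (sub_nonneg.mpr hxt.le),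
            mul_nonneg (sub_nonneg.mpr h) (le_trans hx hxt.le)]
        calc x ^ 2 * f t ≤ B * t * f t :=
              mul_le_mul_of_nonneg_right hx2 (hf_nonneg t)
          _ = B * (t * f t) := by ring
      · rw [hft h]; ring_nf; exact le_refl 0
    have h3 : (∫ t in Set.Ioi x, B * (t * f t)) = B * (m - G x) := by
      rw [integral_const_mul]
      have := hGm x hx
      have : (∫ t in Set.Ioi x, t * f t) = m - G x := by linarith
      rw [this]
    linarith [h1.le, h1.ge]
  have hnum_le : ∀ x : ℝ, 0 ≤ x →
      lam * Q x + lam * x ^ 2 * tailS f x ≤ lam * (B * m) := by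
    intro x hx
    have h1 := hQleB x hx
    have h2 := htail2 x hx
    have h3 : Q x + x ^ 2 * tailS f x ≤ B * m := by linarith
    calc lam * Q x + lam * x ^ 2 * tailS f x
        = lam * (Q x + x ^ 2 * tailS f x) := by ring
      _ ≤ lam * (B * m) := mul_le_mul_of_nonneg_left h3 hlam_pos.le
  have hsec_le : ∀ x : ℝ, 0 ≤ x →
      (∫ t in (0:ℝ)..x, 1 / (1 - lam * G t)) ≤ x * (1 / (1 - lam * m)) := by
    intro x hx
    have h1 : (∫ t in (0:ℝ)..x, 1 / (1 - lam * G t))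
        ≤ ∫ t in (0:ℝ)..x, 1 / (1 - lam * m) := by
      apply intervalIntegral.integral_mono_on hx
        (hcont_inner.intervalIntegrable 0 x) intervalIntegrable_const
      intro t _
      apply one_div_le_one_div_of_le h1ρ
      have := hlamG_le t; linarith
    rw [intervalIntegral.integral_const, smul_eq_mul, sub_zero] at h1
    exact h1
  have hT1ub : ∀ x : ℝ, 0 ≤ x →
      Tsrpt1 f lam x
        ≤ lam * (B * m) / (2 * (1 - lam * G x) ^ 2) + x * (1 / (1 - lam * m)) := by
    intro x hx
    rw [hT1eq x]
    have hd : 0 < 2 * (1 - lam * G x) ^ 2 := by nlinarith [mul_pos (hden x) (hden x)]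
    exact add_le_add ((div_le_div_iff_of_pos_right hd).mpr (hnum_le x hx)) (hsec_le x hx)
  have hT1ub2 : ∀ x : ℝ, 0 ≤ x →
      Tsrpt1 f lam x
        ≤ lam * (B * m) / (2 * (1 - lam * m) ^ 2) + x * (1 / (1 - lam * m)) := by
    intro x hx
    have h1 := hlamG_le x
    have h2 := hden x
    refine le_trans (hT1ub x hx) (add_le_add_left ?_ _)
    have ha : (0:ℝ) ≤ lam * (B * m) := by positivity
    have hc : (0:ℝ) < 2 * (1 - lam * m) ^ 2 := by nlinarith [mul_pos h1ρ h1ρ]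
    exact div_le_div_of_nonneg_left ha hc (by nlinarith)
  have hT1meas : AEStronglyMeasurable (fun x => Tsrpt1 f lam x * f x)
      (volume.restrict (Set.Ioi 0)) :=
    (hT1contOn.aestronglyMeasurable measurableSet_Ioi).mul
      hf_meas.aestronglyMeasurable
  have hTint : IntegrableOn (fun x => Tsrpt1 f lam x * f x) (Set.Ioi 0) := by
    have hb1 : Integrable (fun x : ℝ => lam * (B * m) / (2 * (1 - lam * m) ^ 2) * f x) :=
      hfR.const_mul _
    have hb2 : Integrable (fun x : ℝ => 1 / (1 - lam * m) * (x * f x)) :=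
      hgR.const_mul _
    have hbint : IntegrableOn (fun x : ℝ => lam * (B * m) / (2 * (1 - lam * m) ^ 2) * f x
        + 1 / (1 - lam * m) * (x * f x)) (Set.Ioi 0) := (hb1.add hb2).integrableOn
    apply Integrable.mono'
      (g := fun x => lam * (B * m) / (2 * (1 - lam * m) ^ 2) * f x
        + 1 / (1 - lam * m) * (x * f x))
      hbint hT1meas
    filter_upwards [ae_restrict_mem measurableSet_Ioi] with x hx
    have hx0 : (0:ℝ) ≤ x := le_of_lt hx
    rw [Real.norm_eq_abs, abs_of_nonneg (mul_nonneg (hT1nn x hx0) (hf_nonneg x))]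
    have h2 := mul_le_mul_of_nonneg_right (hT1ub2 x hx0) (hf_nonneg x)
    calc Tsrpt1 f lam x * f x
        ≤ (lam * (B * m) / (2 * (1 - lam * m) ^ 2) + x * (1 / (1 - lam * m))) * f x := h2
      _ = lam * (B * m) / (2 * (1 - lam * m) ^ 2) * f x
          + 1 / (1 - lam * m) * (x * f x) := by ring
  -- upper bound machinery
  have hinvcont : Continuous fun x : ℝ => ((1 - lam * G x) ^ 2)⁻¹ := by
    apply Continuous.inv₀
      ((continuous_const.sub (continuous_const.mul hGcont)).pow 2)
    intro x
    exact ne_of_gt (show (0:ℝ) < (1 - lam * G x) ^ 2 by nlinarith [mul_pos (hden x) (hden x)])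
  have hinv_le : ∀ x : ℝ, ((1 - lam * G x) ^ 2)⁻¹ ≤ ((1 - lam * m) ^ 2)⁻¹ := by
    intro x
    apply inv_anti₀ (by nlinarith [mul_pos h1ρ h1ρ])
    nlinarith [hden x, hlamG_le x, h1ρ]
  have hinv_nn : ∀ x : ℝ, 0 ≤ ((1 - lam * G x) ^ 2)⁻¹ := fun x => by positivity
  have hKmeas : AEStronglyMeasurable (fun x => f x * ((1 - lam * G x) ^ 2)⁻¹)
      (volume.restrict (Set.Ioi 0)) :=
    hf_meas.aestronglyMeasurable.mul hinvcont.aestronglyMeasurable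
  have hKint : IntegrableOn (fun x => f x * ((1 - lam * G x) ^ 2)⁻¹) (Set.Ioi 0) := by
    apply Integrable.mono' ((hfR.const_mul (((1 - lam * m) ^ 2)⁻¹)).integrableOn)
      hKmeas
    filter_upwards with x
    rw [Real.norm_eq_abs, abs_of_nonneg (mul_nonneg (hf_nonneg x) (hinv_nn x))]
    calc f x * ((1 - lam * G x) ^ 2)⁻¹
        ≤ f x * ((1 - lam * m) ^ 2)⁻¹ :=
          mul_le_mul_of_nonneg_left (hinv_le x) (hf_nonneg x)
      _ = ((1 - lam * m) ^ 2)⁻¹ * f x := mul_comm _ _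
  have hJint : IntegrableOn (fun x => lam * (x * f x) * ((1 - lam * G x) ^ 2)⁻¹)
      (Set.Ioi 0) := by
    have hJmeas : AEStronglyMeasurable
        (fun x => lam * (x * f x) * ((1 - lam * G x) ^ 2)⁻¹)
        (volume.restrict (Set.Ioi 0)) :=
      ((measurable_const.mul (measurable_id.mul hf_meas)).aestronglyMeasurable).mul
        hinvcont.aestronglyMeasurable
    apply Integrable.mono'
      ((hgR.const_mul (lam * ((1 - lam * m) ^ 2)⁻¹)).integrableOn)
      hJmeas
    filter_upwards with x
    have h0 : 0 ≤ lam * (x * f x) := mul_nonneg hlam_pos.le (hg_nn x)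
    rw [Real.norm_eq_abs, abs_of_nonneg (mul_nonneg h0 (hinv_nn x))]
    calc lam * (x * f x) * ((1 - lam * G x) ^ 2)⁻¹
        ≤ lam * (x * f x) * ((1 - lam * m) ^ 2)⁻¹ :=
          mul_le_mul_of_nonneg_left (hinv_le x) h0
      _ = lam * ((1 - lam * m) ^ 2)⁻¹ * (x * f x) := by ring
  have hJ : (∫ x in Set.Ioi 0, lam * (x * f x) * ((1 - lam * G x) ^ 2)⁻¹)
      ≤ 2 / (1 - lam * m) := by
    have htail' : (∫ x in Set.Ioi B, lam * (x * f x)) = 0 := by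
      rw [integral_const_mul, htailg0 B le_rfl, mul_zero]
    have hrhodef : lam * m = ∫ x in Set.Ioi (0:ℝ), lam * (x * f x) := by
      rw [integral_const_mul, ← hm_def]
    have hk := key_bound (fun t => lam * (t * f t))
      (measurable_const.mul (measurable_id.mul hf_meas))
      (fun t => mul_nonneg hlam_pos.le (hg_nn t)) (hgR.const_mul lam)
      B hB0 htail' (lam * m) hrhodef hρ
    have heq2 : ∀ x ∈ Set.Ioi (0:ℝ), lam * (x * f x) * ((1 - lam * G x) ^ 2)⁻¹
        = lam * (x * f x) / (1 - ∫ t in (0:ℝ)..x, lam * (t * f t)) ^ 2 := by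
      intro x _
      rw [intervalIntegral.integral_const_mul, div_eq_mul_inv]
    rw [setIntegral_congr_fun measurableSet_Ioi heq2]
    exact hk
  -- pointwise rearrangement of the upper bound integrand
  have heqpt : ∀ x : ℝ,
      (lam * (B * m) / (2 * (1 - lam * G x) ^ 2) + x * (1 / (1 - lam * m))) * f x
        = lam * (B * m) / 2 * (f x * ((1 - lam * G x) ^ 2)⁻¹)
          + 1 / (1 - lam * m) * (x * f x) := by
    intro x
    have hdx : ((1 - lam * G x) ^ 2) ≠ 0 :=
      ne_of_gt (by nlinarith [mul_pos (hden x) (hden x)])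
    field_simp
  have hub_int : IntegrableOn (fun x =>
      (lam * (B * m) / (2 * (1 - lam * G x) ^ 2) + x * (1 / (1 - lam * m))) * f x)
      (Set.Ioi 0) := by
    have h1 : IntegrableOn (fun x : ℝ =>
        lam * (B * m) / 2 * (f x * ((1 - lam * G x) ^ 2)⁻¹)) (Set.Ioi 0) :=
      hKint.const_mul _
    have h2 : IntegrableOn (fun x : ℝ => 1 / (1 - lam * m) * (x * f x)) (Set.Ioi 0) :=
      (hgR.const_mul _).integrableOn
    have := h1.add h2
    rw [show (fun x =>
      (lam * (B * m) / (2 * (1 - lam * G x) ^ 2) + x * (1 / (1 - lam * m))) * f x)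
      = (fun x => lam * (B * m) / 2 * (f x * ((1 - lam * G x) ^ 2)⁻¹)
          + 1 / (1 - lam * m) * (x * f x)) from funext heqpt]
    exact this
  have hmean_ub1 : TsrptMean f lam
      ≤ ∫ x in Set.Ioi 0,
          (lam * (B * m) / (2 * (1 - lam * G x) ^ 2) + x * (1 / (1 - lam * m))) * f x := by
    apply setIntegral_mono_on hTint hub_int measurableSet_Ioi
    intro x hx
    exact mul_le_mul_of_nonneg_right (hT1ub x (le_of_lt hx)) (hf_nonneg x)
  have hxfm : (∫ x in Set.Ioi (0:ℝ), x * f x) = m := hm_def.symm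
  have hmean_ub2 : (∫ x in Set.Ioi 0,
      (lam * (B * m) / (2 * (1 - lam * G x) ^ 2) + x * (1 / (1 - lam * m))) * f x)
      = lam * (B * m) / 2 * (∫ x in Set.Ioi 0, f x * ((1 - lam * G x) ^ 2)⁻¹)
        + 1 / (1 - lam * m) * m := by
    rw [setIntegral_congr_fun measurableSet_Ioi (fun x _ => heqpt x)]
    rw [integral_add (hKint.const_mul _) ((hgR.const_mul _).integrableOn),
      integral_const_mul, integral_const_mul, hxfm]
  -- split and bound K'
  have hKsplit : (∫ x in Set.Ioi 0, f x * ((1 - lam * G x) ^ 2)⁻¹)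
      = (∫ x in Set.Ioc 0 a, f x * ((1 - lam * G x) ^ 2)⁻¹)
        + ∫ x in Set.Ioi a, f x * ((1 - lam * G x) ^ 2)⁻¹ := by
    rw [← setIntegral_union (Set.Ioc_disjoint_Ioi le_rfl) measurableSet_Ioi
      (hKint.mono_set Set.Ioc_subset_Ioi_self)
      (hKint.mono_set (Set.Ioi_subset_Ioi ha0.le)),
      Set.Ioc_union_Ioi_eq_Ioi ha0.le]
  have hK1 : (∫ x in Set.Ioc 0 a, f x * ((1 - lam * G x) ^ 2)⁻¹) ≤ 4 := by
    have hstep : ∀ x ∈ Set.Ioc 0 a,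
        f x * ((1 - lam * G x) ^ 2)⁻¹ ≤ 4 * f x := by
      intro x hx
      have hGa : G x ≤ m / 2 := le_trans (hGmono hx.2) haG
      have h1 : lam * G x ≤ 1 / 2 := by
        calc lam * G x ≤ lam * (m / 2) :=
              mul_le_mul_of_nonneg_left hGa hlam_pos.le
          _ ≤ (1 / m) * (m / 2) :=
              mul_le_mul_of_nonneg_right hl1.le (by positivity)
          _ = 1 / 2 := by field_simp
      have h2 : (1:ℝ) / 4 ≤ (1 - lam * G x) ^ 2 := by nlinarith
      have h3 : ((1 - lam * G x) ^ 2)⁻¹ ≤ 4 := by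
        have := inv_anti₀ (by norm_num : (0:ℝ) < 1 / 4) h2
        norm_num at this
        exact this
      calc f x * ((1 - lam * G x) ^ 2)⁻¹ ≤ f x * 4 :=
            mul_le_mul_of_nonneg_left h3 (hf_nonneg x)
        _ = 4 * f x := mul_comm _ _
    calc (∫ x in Set.Ioc 0 a, f x * ((1 - lam * G x) ^ 2)⁻¹)
        ≤ ∫ x in Set.Ioc 0 a, 4 * f x :=
          setIntegral_mono_on (hKint.mono_set Set.Ioc_subset_Ioi_self)
            ((hfR.const_mul 4).integrableOn) measurableSet_Ioc hstep
      _ = 4 * ∫ x in Set.Ioc 0 a, f x := integral_const_mul _ _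
      _ ≤ 4 * ∫ x in Set.Ioi 0, f x := by
          apply mul_le_mul_of_nonneg_left _ (by norm_num : (0:ℝ) ≤ 4)
          exact setIntegral_mono_set hf_int
            (Filter.Eventually.of_forall fun x => hf_nonneg x)
            (HasSubset.Subset.eventuallyLE Set.Ioc_subset_Ioi_self)
      _ = 4 := by rw [hf_prob]; norm_num
  have hK2 : (∫ x in Set.Ioi a, f x * ((1 - lam * G x) ^ 2)⁻¹)
      ≤ 1 / (a * lam) * (2 / (1 - lam * m)) := by
    have hstep : ∀ x ∈ Set.Ioi a,
        f x * ((1 - lam * G x) ^ 2)⁻¹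
          ≤ 1 / (a * lam) * (lam * (x * f x) * ((1 - lam * G x) ^ 2)⁻¹) := by
      intro x hx
      have hax : a ≤ x := le_of_lt hx
      have h1 : f x ≤ x / a * f x :=
        le_mul_of_one_le_left (hf_nonneg x) ((one_le_div ha0).mpr hax)
      calc f x * ((1 - lam * G x) ^ 2)⁻¹
          ≤ x / a * f x * ((1 - lam * G x) ^ 2)⁻¹ :=
            mul_le_mul_of_nonneg_right h1 (hinv_nn x)
        _ = 1 / (a * lam) * (lam * (x * f x) * ((1 - lam * G x) ^ 2)⁻¹) := by
            have ha' : a ≠ 0 := ha0.ne'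
            have hl' : lam ≠ 0 := hlam_pos.ne'
            generalize ((1 - lam * G x) ^ 2)⁻¹ = v
            generalize f x = w
            field_simp
    calc (∫ x in Set.Ioi a, f x * ((1 - lam * G x) ^ 2)⁻¹)
        ≤ ∫ x in Set.Ioi a,
            1 / (a * lam) * (lam * (x * f x) * ((1 - lam * G x) ^ 2)⁻¹) :=
          setIntegral_mono_on (hKint.mono_set (Set.Ioi_subset_Ioi ha0.le))
            (IntegrableOn.mono_set
              (show IntegrableOn (fun x => 1 / (a * lam)
                  * (lam * (x * f x) * ((1 - lam * G x) ^ 2)⁻¹)) (Set.Ioi 0) volume from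
                hJint.const_mul _)
              (Set.Ioi_subset_Ioi ha0.le))
            measurableSet_Ioi hstep
      _ = 1 / (a * lam) * ∫ x in Set.Ioi a,
            lam * (x * f x) * ((1 - lam * G x) ^ 2)⁻¹ := integral_const_mul _ _
      _ ≤ 1 / (a * lam) * ∫ x in Set.Ioi 0,
            lam * (x * f x) * ((1 - lam * G x) ^ 2)⁻¹ := by
          apply mul_le_mul_of_nonneg_left _ (by positivity)
          apply setIntegral_mono_set hJint
          · filter_upwards with x
            exact mul_nonneg (mul_nonneg hlam_pos.le (hg_nn x)) (hinv_nn x)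
          · exact HasSubset.Subset.eventuallyLE (Set.Ioi_subset_Ioi ha0.le)
      _ ≤ 1 / (a * lam) * (2 / (1 - lam * m)) :=
          mul_le_mul_of_nonneg_left hJ (by positivity)
  -- final arithmetic for the upper bound
  have hupper : TsrptMean f lam ≤ max Cu cl / (1 - lam * m) := by
    have hK'nn : 0 ≤ ∫ x in Set.Ioi 0, f x * ((1 - lam * G x) ^ 2)⁻¹ :=
      setIntegral_nonneg measurableSet_Ioi fun x _ =>
        mul_nonneg (hf_nonneg x) (hinv_nn x)
    have hKb : (∫ x in Set.Ioi 0, f x * ((1 - lam * G x) ^ 2)⁻¹)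
        ≤ 4 + 1 / (a * lam) * (2 / (1 - lam * m)) := by
      rw [hKsplit]; exact add_le_add hK1 hK2
    have hts : 1 / (a * lam) ≤ 1 / (a * lam₀) := by
      apply one_div_le_one_div_of_le (by positivity)
      exact mul_le_mul_of_nonneg_left hl0.le ha0.le
    have h2u : (0:ℝ) ≤ 2 / (1 - lam * m) := by positivity
    have hKb2 : (∫ x in Set.Ioi 0, f x * ((1 - lam * G x) ^ 2)⁻¹)
        ≤ 4 + 1 / (a * lam₀) * (2 / (1 - lam * m)) := by
      refine le_trans hKb ?_
      have := mul_le_mul_of_nonneg_right hts h2u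
      linarith
    have hA0 : 0 ≤ lam * (B * m) / 2 := by positivity
    have hAB : lam * (B * m) / 2 ≤ B / 2 := by
      have h := mul_le_mul_of_nonneg_left hρ.le hB0.le
      linarith [h]
    have h5 : lam * (B * m) / 2 * (∫ x in Set.Ioi 0, f x * ((1 - lam * G x) ^ 2)⁻¹)
        ≤ B / 2 * (4 + 1 / (a * lam₀) * (2 / (1 - lam * m))) :=
      mul_le_mul hAB hKb2 hK'nn (by positivity)
    have hs0 : 0 ≤ 1 / (a * lam₀) := by positivity
    have hu1 : 1 - lam * m ≤ 1 := by
      have := mul_nonneg hlam_pos.le hm_pos.le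
      linarith
    have hBu : 2 * B ≤ 2 * B / (1 - lam * m) := by
      rw [le_div_iff₀ h1ρ]
      have h := mul_nonneg (mul_nonneg (by norm_num : (0:ℝ) ≤ 2) hB0.le)
        (mul_nonneg hlam_pos.le hm_pos.le)
      linarith [h]
    have hexp1 : B / 2 * (4 + 1 / (a * lam₀) * (2 / (1 - lam * m)))
        + 1 / (1 - lam * m) * m
        = 2 * B + (B * (1 / (a * lam₀))) / (1 - lam * m) + m / (1 - lam * m) := by
      have hu : (1 - lam * m) ≠ 0 := h1ρ.ne'
      generalize (1:ℝ) / (a * lam₀) = s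
      field_simp
      ring
    have hexp2 : Cu / (1 - lam * m)
        = 2 * B / (1 - lam * m) + (B * (1 / (a * lam₀))) / (1 - lam * m)
          + m / (1 - lam * m) := by
      rw [hCudef]
      have hu : (1 - lam * m) ≠ 0 := h1ρ.ne'
      generalize (1:ℝ) / (a * lam₀) = s
      field_simp
    have hfinal : B / 2 * (4 + 1 / (a * lam₀) * (2 / (1 - lam * m)))
        + 1 / (1 - lam * m) * m ≤ Cu / (1 - lam * m) := by
      rw [hexp1, hexp2]
      linarith
    have hmax : Cu / (1 - lam * m) ≤ max Cu cl / (1 - lam * m) :=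
      (div_le_div_iff_of_pos_right h1ρ).mpr (le_max_left _ _)
    calc TsrptMean f lam
        ≤ lam * (B * m) / 2 * (∫ x in Set.Ioi 0, f x * ((1 - lam * G x) ^ 2)⁻¹)
          + 1 / (1 - lam * m) * m := by rw [← hmean_ub2]; exact hmean_ub1
      _ ≤ B / 2 * (4 + 1 / (a * lam₀) * (2 / (1 - lam * m)))
          + 1 / (1 - lam * m) * m := by linarith
      _ ≤ Cu / (1 - lam * m) := hfinal
      _ ≤ max Cu cl / (1 - lam * m) := hmax
  -- lower bound
  have hc0pos : 0 < c0 := hQxh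
  have hlamr : 1 - lam * m < lam * r := by
    have hmr : (0:ℝ) < m + r := add_pos hm_pos hr0
    have h1 := hl0
    rw [hlam₀def] at h1
    have h2 : 1 < lam * (m + r) := (div_lt_iff₀ hmr).mp h1
    have h3 : lam * (m + r) = lam * m + lam * r := by ring
    linarith only [h2, h3]
  have hxhB : xh ≤ B := le_trans hxhlt.le hxstarB
  have hφcont : ContinuousOn (fun x : ℝ => lam * (m - G x)) (Set.Icc xh B) :=
    (continuous_const.mul (continuous_const.sub hGcont)).continuousOn
  have hmem : (1 - lam * m) ∈
      Set.Icc (lam * (m - G B)) (lam * (m - G xh)) := by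
    constructor
    · rw [hGB]
      have h : lam * (m - m) = 0 := by ring
      linarith only [h, h1ρ]
    · have he : lam * (m - G xh) = lam * r := by rw [hrdef]
      linarith only [he, hlamr]
  obtain ⟨x₁, hx₁Icc, hx₁val⟩ := intermediate_value_Icc' hxhB hφcont hmem
  have hGx₁ : lam * (m - G x₁) = 1 - lam * m := hx₁val
  have hx₁pos : 0 < x₁ := lt_of_lt_of_le hxh0 hx₁Icc.1
  have htail_f_lb : (1 - lam * m) / (lam * B) ≤ ∫ x in Set.Ioi x₁, f x := by
    have h1 : (∫ x in Set.Ioi x₁, x * f x) ≤ B * ∫ x in Set.Ioi x₁, f x := by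
      rw [← integral_const_mul]
      apply integral_mono_ae hgR.integrableOn ((hfR.const_mul B).integrableOn)
      filter_upwards [ae_restrict_of_ae hsupp] with t ht
      rcases le_or_gt t B with h | h
      · exact mul_le_mul_of_nonneg_right h (hf_nonneg t)
      · rw [ht h]; simp
    have h2 : (∫ x in Set.Ioi x₁, x * f x) = m - G x₁ := by
      linarith only [hGm x₁ hx₁pos.le]
    have h3 : m - G x₁ = (1 - lam * m) / lam :=
      (eq_div_iff hlam_pos.ne').mpr (by linarith only [hGx₁])
    have h4 : (1 - lam * m) / lam ≤ B * ∫ x in Set.Ioi x₁, f x := by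
      rw [← h3, ← h2]; exact h1
    rw [div_le_iff₀ hlam_pos] at h4
    rw [div_le_iff₀ (by positivity : (0:ℝ) < lam * B)]
    linarith only [h4]
  have hT1lb : ∀ x ∈ Set.Ioi x₁,
      lam * c0 / (8 * (1 - lam * m) ^ 2) ≤ Tsrpt1 f lam x := by
    intro x hx
    have hx₁x : x₁ ≤ x := le_of_lt hx
    have hx0 : 0 ≤ x := le_trans hx₁pos.le hx₁x
    rw [hT1eq x]
    have hQge : c0 ≤ Q x := by
      rw [hc0def]
      exact hQmono (le_trans hx₁Icc.1 hx₁x)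
    have hdub : 1 - lam * G x ≤ 2 * (1 - lam * m) := by
      have h1 : G x₁ ≤ G x := hGmono hx₁x
      have h2 : lam * (m - G x) ≤ lam * (m - G x₁) :=
        mul_le_mul_of_nonneg_left (by linarith) hlam_pos.le
      have h3 : lam * (m - G x) = lam * m - lam * G x := by ring
      have h4 : lam * (m - G x₁) = lam * m - lam * G x₁ := by ring
      linarith only [hGx₁, h2, h3, h4]
    have hfrac : lam * c0 / (8 * (1 - lam * m) ^ 2)
        ≤ lam * Q x / (2 * (1 - lam * G x) ^ 2) := by
      apply div_le_div₀ (mul_nonneg hlam_pos.le (le_trans hc0pos.le hQge))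
        (mul_le_mul_of_nonneg_left hQge hlam_pos.le)
        (by nlinarith only [mul_pos (hden x) (hden x)])
        (by nlinarith only [mul_self_le_mul_self (hden x).le hdub])
    have hd : 0 < 2 * (1 - lam * G x) ^ 2 := by
      nlinarith only [mul_pos (hden x) (hden x)]
    have htt : lam * Q x / (2 * (1 - lam * G x) ^ 2)
        ≤ (lam * Q x + lam * x ^ 2 * tailS f x) / (2 * (1 - lam * G x) ^ 2) := by
      apply (div_le_div_iff_of_pos_right hd).mpr
      have := mul_nonneg (mul_nonneg hlam_pos.le (sq_nonneg x)) (htail_nn x)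
      linarith only [this]
    have hrest : 0 ≤ ∫ t in (0:ℝ)..x, 1 / (1 - lam * G t) :=
      intervalIntegral.integral_nonneg hx0 fun t _ =>
        le_of_lt (one_div_pos.mpr (hden t))
    linarith only [hfrac, htt, hrest]
  have hlower : cl / (1 - lam * m) ≤ TsrptMean f lam := by
    have h0 : (∫ x in Set.Ioi x₁, lam * c0 / (8 * (1 - lam * m) ^ 2) * f x)
        ≤ ∫ x in Set.Ioi x₁, Tsrpt1 f lam x * f x := by
      apply setIntegral_mono_on ((hfR.const_mul _).integrableOn)
        (hTint.mono_set (Set.Ioi_subset_Ioi hx₁pos.le)) measurableSet_Ioi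
      intro x hx
      exact mul_le_mul_of_nonneg_right (hT1lb x hx) (hf_nonneg x)
    have h1 : (∫ x in Set.Ioi x₁, Tsrpt1 f lam x * f x) ≤ TsrptMean f lam := by
      apply setIntegral_mono_set hTint
      · filter_upwards [ae_restrict_mem measurableSet_Ioi] with x hx
        exact mul_nonneg (hT1nn x (le_of_lt hx)) (hf_nonneg x)
      · exact HasSubset.Subset.eventuallyLE (Set.Ioi_subset_Ioi hx₁pos.le)
    have h2 : (∫ x in Set.Ioi x₁, lam * c0 / (8 * (1 - lam * m) ^ 2) * f x)
        = lam * c0 / (8 * (1 - lam * m) ^ 2) * ∫ x in Set.Ioi x₁, f x :=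
      integral_const_mul _ _
    have h3 : lam * c0 / (8 * (1 - lam * m) ^ 2) * ((1 - lam * m) / (lam * B))
        ≤ lam * c0 / (8 * (1 - lam * m) ^ 2) * ∫ x in Set.Ioi x₁, f x := by
      apply mul_le_mul_of_nonneg_left htail_f_lb
      have hnum : 0 ≤ lam * c0 := mul_nonneg hlam_pos.le hc0pos.le
      positivity
    have h4 : lam * c0 / (8 * (1 - lam * m) ^ 2) * ((1 - lam * m) / (lam * B))
        = cl / (1 - lam * m) := by
      rw [hcldef]
      have hu : (1 - lam * m) ≠ 0 := h1ρ.ne'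
      have hl' : lam ≠ 0 := hlam_pos.ne'
      have hB' : B ≠ 0 := hB0.ne'
      field_simp
    linarith only [h0, h1, h2, h3, h4]
  exact ⟨hlower, hupper⟩
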